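/- Let n > 2 and k ≥ 1 be integers. If there exists a real t̃ with k < t̃ < k+1 and t̃^{n-2} = (n-1)!/(k+1), then k = ⌊((n-1)!)^{1/(n-1)}⌋. -/

import Mathlib

/-- If there exists `t̃` with `k < t̃ < k+1` and
`t̃^{n-2} = (n-1)!/(k+1)`, then `k = ⌊((n-1)!)^{1/(n-1)}⌋`. -/
theorem optimum_k_formula (n k : ℕ) (hn : 2 < n) (hk : 1 ≤ k) (t : ℝ)
    (ht1 : (k : ℝ) < t) (ht2 : t < (k : ℝ) + 1)
    (heq : t ^ (n - 2) = ((n - 1).factorial : ℝ) / ((k : ℝ) + 1)) :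
    k = Nat.floor ((((n - 1).factorial : ℝ)) ^ ((1 : ℝ) / ((n : ℝ) - 1))) := by
  set F : ℝ := ((n - 1).factorial : ℝ) with hF
  have hk1 : (1 : ℝ) ≤ (k : ℝ) := by exact_mod_cast hk
  have hkpos : (0 : ℝ) < (k : ℝ) := by linarith
  have hk1pos : (0 : ℝ) < (k : ℝ) + 1 := by linarith
  have hFpos : (0 : ℝ) < F := by
    have := (n - 1).factorial_pos
    rw [hF]; exact_mod_cast this
  have hFeq : F = t ^ (n - 2) * ((k : ℝ) + 1) := by
    field_simp at heq
    linarith [heq]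
  have hm2 : 1 ≤ n - 2 := by omega
  have hlow : ((k : ℝ)) ^ (n - 1) < F := by
    have h1 : ((k : ℝ)) ^ (n - 2) < t ^ (n - 2) :=
      pow_lt_pow_left₀ ht1 hkpos.le (by omega)
    have h2 : ((k : ℝ)) ^ (n - 1) = (k : ℝ) ^ (n - 2) * (k : ℝ) := by
      rw [← pow_succ]; congr 1; omega
    have h3 : (k : ℝ) ^ (n - 2) * (k : ℝ) < t ^ (n - 2) * ((k : ℝ) + 1) := by
      have hp : (0 : ℝ) < (k : ℝ) ^ (n - 2) := pow_pos hkpos _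
      nlinarith [pow_pos (hkpos.trans ht1) (n - 2)]
    rw [hFeq, h2]; exact h3
  have hhigh : F < ((k : ℝ) + 1) ^ (n - 1) := by
    have h1 : t ^ (n - 2) < ((k : ℝ) + 1) ^ (n - 2) :=
      pow_lt_pow_left₀ ht2 (by linarith [hkpos.le, ht1]) (by omega)
    have h2 : ((k : ℝ) + 1) ^ (n - 1) = ((k : ℝ) + 1) ^ (n - 2) * ((k : ℝ) + 1) := by
      rw [← pow_succ]; congr 1; omega
    rw [hFeq, h2]
    exact mul_lt_mul_of_pos_right h1 hk1pos
  -- exponent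
  have hmcast : ((n - 1 : ℕ) : ℝ) = (n : ℝ) - 1 := by
    have : (1 : ℕ) ≤ n := by omega
    push_cast [Nat.cast_sub this]; ring
  have hmpos : (0 : ℝ) < (n : ℝ) - 1 := by
    rw [← hmcast]; exact_mod_cast Nat.sub_pos_of_lt (by omega)
  set e : ℝ := (1 : ℝ) / ((n : ℝ) - 1) with he
  have hepos : 0 < e := by positivity
  have key : ∀ x : ℝ, 0 ≤ x → (x ^ (n - 1)) ^ e = x := by
    intro x hx
    rw [← Real.rpow_natCast x (n - 1), ← Real.rpow_mul hx, hmcast, he,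
      mul_one_div_cancel (ne_of_gt hmpos), Real.rpow_one]
  have hlow' : (k : ℝ) < F ^ e := by
    have := Real.rpow_lt_rpow (by positivity) hlow hepos
    rwa [key (k : ℝ) hkpos.le] at this
  have hhigh' : F ^ e < (k : ℝ) + 1 := by
    have := Real.rpow_lt_rpow hFpos.le hhigh hepos
    rwa [key ((k : ℝ) + 1) hk1pos.le] at this
  symm
  rw [Nat.floor_eq_iff (by positivity)]
  constructor
  · exact hlow'.le
  · push_cast; exact hhigh'
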